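/- Let H be a self-adjoint operator on a finite-dimensional complex Hilbert space and let W : ℝ → ℝ be an odd function such that both W and s ↦ s·W(s) are integrable on ℝ. Then for every operator B: ∫_ℝ W(s) e^{iHs} B e^{−iHs} ds = i ∫_ℝ W(s) ( ∫₀^s e^{iHu} [H, B] e^{−iHu} du ) ds. -/

import Mathlib

open ContinuousLinearMap MeasureTheory

set_option maxHeartbeats 1000000
set_option synthInstance.maxHeartbeats 400000

noncomputable section

variable {ℋ : Type*} [NormedAddCommGroup ℋ] [InnerProductSpace ℂ ℋ] [FiniteDimensional ℂ ℋ]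

/-- Heisenberg evolution `e^{iHu} B e^{-iHu}` of an operator `B`. -/
def heis (H B : ℋ →L[ℂ] ℋ) (u : ℝ) : ℋ →L[ℂ] ℋ :=
  NormedSpace.exp ((Complex.I * u) • H) * B * NormedSpace.exp ((-Complex.I * u) • H)

namespace Stmt10Aux

open NormedSpace

lemma smul_eq (H : ℋ →L[ℂ] ℋ) (u : ℝ) :
    (Complex.I * u) • H = u • (Complex.I • H) := by
  rw [mul_smul, smul_comm]
  norm_num

lemma smul_eq' (H : ℋ →L[ℂ] ℋ) (u : ℝ) :
    (-Complex.I * u) • H = u • (-(Complex.I • H)) := by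
  rw [smul_neg, ← smul_eq, ← neg_smul, neg_mul]

lemma hasDerivAt_f (H : ℋ →L[ℂ] ℋ) (u : ℝ) :
    HasDerivAt (fun v : ℝ => exp ((Complex.I * v) • H))
      (exp ((Complex.I * u) • H) * (Complex.I • H)) u := by
  have h := hasDerivAt_exp_smul_const (𝕂 := ℝ) (Complex.I • H) u
  simpa only [← smul_eq] using h

lemma hasDerivAt_g (H : ℋ →L[ℂ] ℋ) (u : ℝ) :
    HasDerivAt (fun v : ℝ => exp ((-Complex.I * v) • H))
      (exp ((-Complex.I * u) • H) * (-(Complex.I • H))) u := by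
  have h := hasDerivAt_exp_smul_const (𝕂 := ℝ) (-(Complex.I • H)) u
  simpa only [← smul_eq'] using h

lemma commute_f (H : ℋ →L[ℂ] ℋ) (c : ℂ) :
    Commute (exp (c • H)) H :=
  ((Commute.refl H).smul_left c).exp_left

lemma hasDerivAt_heis (H B : ℋ →L[ℂ] ℋ) (u : ℝ) :
    HasDerivAt (heis H B) (Complex.I • heis H (H * B - B * H) u) u := by
  have hf := hasDerivAt_f H u
  have hg := hasDerivAt_g H u
  have h := (hf.mul_const B).mul hg
  have heq : heis H B = fun v : ℝ =>
      (exp ((Complex.I * v) • H) * B) * exp ((-Complex.I * v) • H) := by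
    funext v; simp [heis, mul_assoc]
  rw [heq]
  refine h.congr_deriv (Eq.symm ?_)
  set f := exp ((Complex.I * u) • H) with hf'
  set g := exp ((-Complex.I * u) • H) with hg'
  have hgH : g * H = H * g := (commute_f H (-Complex.I * u)).eq
  simp only [heis, mul_neg, ← sub_eq_add_neg, mul_sub, sub_mul, smul_sub,
    mul_smul_comm, smul_mul_assoc, mul_assoc, hgH]
  rfl

lemma continuous_heis (H B : ℋ →L[ℂ] ℋ) : Continuous (heis H B) :=
  continuous_iff_continuousAt.2 fun u => (hasDerivAt_heis H B u).continuousAt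

lemma heis_zero (H B : ℋ →L[ℂ] ℋ) : heis H B 0 = B := by
  simp [heis, NormedSpace.exp_zero]

/-- fundamental theorem of calculus for the Heisenberg evolution -/
lemma ftc (H B : ℋ →L[ℂ] ℋ) (u : ℝ) :
    heis H B u - B = Complex.I • ∫ w in (0:ℝ)..u, heis H (H * B - B * H) w := by
  rw [← intervalIntegral.integral_smul]
  have := intervalIntegral.integral_eq_sub_of_hasDerivAt
    (f := heis H B) (f' := fun w => Complex.I • heis H (H * B - B * H) w)
    (a := 0) (b := u)
    (fun t _ => hasDerivAt_heis H B t)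
    (((continuous_heis H (H * B - B * H)).const_smul Complex.I).intervalIntegrable 0 u)
  rw [this, heis_zero]

lemma exp_mem_unitary (H : ℋ →L[ℂ] ℋ) (hH : IsSelfAdjoint H) (u : ℝ) :
    exp ((Complex.I * u) • H) ∈ unitary (ℋ →L[ℂ] ℋ) := by
  have hstar : star (exp ((Complex.I * u) • H)) = exp ((-Complex.I * u) • H) := by
    rw [NormedSpace.star_exp]
    congr 1
    rw [star_smul, hH.star_eq]
    congr 1
    simp [Complex.ext_iff]
  have hmul1 : exp ((-Complex.I * u) • H) * exp ((Complex.I * u) • H) = 1 := by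
    rw [← NormedSpace.exp_add_of_commute_of_mem_ball (𝕂 := ℂ) ?_
      (by simp [NormedSpace.expSeries_radius_eq_top]) (by simp [NormedSpace.expSeries_radius_eq_top])]
    · rw [show (-Complex.I * u) • H + (Complex.I * u) • H = 0 by
        rw [← add_smul]; ring_nf; simp]
      exact NormedSpace.exp_zero
    · exact ((Commute.refl H).smul_left _).smul_right _
  have hmul2 : exp ((Complex.I * u) • H) * exp ((-Complex.I * u) • H) = 1 := by
    rw [← NormedSpace.exp_add_of_commute_of_mem_ball (𝕂 := ℂ) ?_
      (by simp [NormedSpace.expSeries_radius_eq_top]) (by simp [NormedSpace.expSeries_radius_eq_top])]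
    · rw [show (Complex.I * u) • H + (-Complex.I * u) • H = 0 by
        rw [← add_smul]; ring_nf; simp]
      exact NormedSpace.exp_zero
    · exact ((Commute.refl H).smul_left _).smul_right _
  exact ⟨by rw [hstar]; exact hmul1, by rw [hstar]; exact hmul2⟩

lemma exp_mem_unitary' (H : ℋ →L[ℂ] ℋ) (hH : IsSelfAdjoint H) (u : ℝ) :
    exp ((-Complex.I * u) • H) ∈ unitary (ℋ →L[ℂ] ℋ) := by
  have := exp_mem_unitary H hH (-u)
  rwa [show (Complex.I * ((-u : ℝ) : ℂ)) • H = (-Complex.I * u) • H by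
    congr 1; push_cast; ring] at this

lemma norm_heis_le (H B : ℋ →L[ℂ] ℋ) (hH : IsSelfAdjoint H) (u : ℝ) :
    ‖heis H B u‖ ≤ ‖B‖ := by
  apply ContinuousLinearMap.opNorm_le_bound _ (norm_nonneg B)
  intro x
  show ‖(exp ((Complex.I * u) • H)) (B ((exp ((-Complex.I * u) • H)) x))‖ ≤ ‖B‖ * ‖x‖
  rw [ContinuousLinearMap.norm_map_of_mem_unitary (exp_mem_unitary H hH u)]
  calc ‖B ((exp ((-Complex.I * u) • H)) x)‖
      ≤ ‖B‖ * ‖(exp ((-Complex.I * u) • H)) x‖ := B.le_opNorm _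
    _ = ‖B‖ * ‖x‖ := by
        rw [ContinuousLinearMap.norm_map_of_mem_unitary (exp_mem_unitary' H hH u)]

end Stmt10Aux

open Stmt10Aux in
/-- for a self-adjoint `H` on a finite-dimensional complex Hilbert space and an
odd function `W` with `W` and `s·W(s)` integrable,
`∫ W(s) e^{iHs} B e^{-iHs} ds = i ∫ W(s) (∫₀^s e^{iHu} [H,B] e^{-iHu} du) ds`. -/
theorem stmt10 (H B : ℋ →L[ℂ] ℋ) (hH : IsSelfAdjoint H)
    (W : ℝ → ℝ) (hodd : ∀ u : ℝ, W (-u) = -W u)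
    (hW1 : Integrable W) (hW2 : Integrable (fun u : ℝ => u * W u)) :
    ∫ u : ℝ, W u • heis H B u =
      Complex.I • ∫ u : ℝ, W u • (∫ w in (0:ℝ)..u, heis H (H * B - B * H) w) := by
  -- pointwise identity: W u • primitive = (-I) • (W u • heis u - W u • B)
  have key : ∀ u : ℝ, W u • (∫ w in (0:ℝ)..u, heis H (H * B - B * H) w)
      = (-Complex.I) • (W u • heis H B u - W u • B) := by
    intro u
    have h := ftc H B u
    have : (∫ w in (0:ℝ)..u, heis H (H * B - B * H) w)
        = (-Complex.I) • (heis H B u - B) := by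
      rw [h, smul_smul]
      norm_num
    rw [this, smul_comm, smul_sub]
  -- integrability
  have hint1 : Integrable (fun u : ℝ => W u • heis H B u) := by
    refine Integrable.mono' ((hW1.norm.const_mul ‖B‖)) ?_ ?_
    · exact hW1.1.smul (continuous_heis H B).aestronglyMeasurable
    · filter_upwards with u
      calc ‖W u • heis H B u‖ ≤ ‖W u‖ * ‖heis H B u‖ :=
            ContinuousLinearMap.opNorm_smul_le _ _
        _ ≤ ‖W u‖ * ‖B‖ :=
            mul_le_mul_of_nonneg_left (norm_heis_le H B hH u) (norm_nonneg _)
        _ = ‖B‖ * ‖W u‖ := mul_comm _ _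
  have hint2 : Integrable (fun u : ℝ => W u • B) := hW1.smul_const B
  -- compute RHS
  rw [show (fun u : ℝ => W u • (∫ w in (0:ℝ)..u, heis H (H * B - B * H) w))
      = fun u : ℝ => (-Complex.I) • (W u • heis H B u - W u • B) from funext key]
  rw [integral_smul, smul_smul]
  simp only [mul_neg, Complex.I_mul_I, neg_neg, one_smul]
  rw [integral_sub hint1 hint2, integral_smul_const]
  have hWzero : ∫ u : ℝ, W u = 0 := by
    have h1 : ∫ u : ℝ, W (-u) = ∫ u : ℝ, W u := integral_neg_eq_self W volume
    have h2 : ∫ u : ℝ, W (-u) = -∫ u : ℝ, W u := by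
      simp only [hodd, integral_neg]
    linarith [h1.symm.trans h2]
  rw [hWzero, zero_smul, sub_zero]
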